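/- Let d ≥ 2 be an integer, let v₁, v₂ ∈ ℝ^d with r := |v₁ − v₂| > 0, define J : ℝ^d → ℝ^d by J(ω) = r^{-1}((v₁ − v₂) + 2⟨ω, v₂ − v₁⟩ω), and let S⁺ = {ω ∈ 𝕊₁^{d-1} : ⟨ω, v₂ − v₁⟩ > 0}. Then there is a constant C > 0, depending only on d, such that for every measurable function g : ℝ^d → [0, ∞], ∫_{S⁺} g(J(ω)) ⟨ω, v₂ − v₁⟩^d dσ(ω) ≤ C r^d ∫_{𝕊₁^{d-1}} g(ν) dσ(ν), where σ denotes the surface measure ((d−1)-dimensional Hausdorff measure) on 𝕊₁^{d-1}. -/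

import Mathlib

open MeasureTheory Set
open scoped ENNReal NNReal

lemma normalize_lipschitzOnWith {E : Type*} [NormedAddCommGroup E] [NormedSpace ℝ E]
    {ρ : ℝ} (hρ : 0 < ρ) :
    LipschitzOnWith (⟨2 / ρ, by positivity⟩ : NNReal) (fun y : E => ‖y‖⁻¹ • y)
      {y : E | ρ ≤ ‖y‖} := by
  refine lipschitzOnWith_iff_dist_le_mul.mpr ?_
  intro a ha b hb
  simp only [Set.mem_setOf_eq] at ha hb
  have hpa : (0:ℝ) < ‖a‖ := lt_of_lt_of_le hρ ha
  have hpb : (0:ℝ) < ‖b‖ := lt_of_lt_of_le hρ hb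
  rw [dist_eq_norm, dist_eq_norm]
  have key : ‖a‖⁻¹ • a - ‖b‖⁻¹ • b = ‖a‖⁻¹ • (a - b) + (‖a‖⁻¹ - ‖b‖⁻¹) • b := by
    rw [smul_sub, sub_smul]; abel
  have h1 : ‖‖a‖⁻¹ • (a - b)‖ ≤ ρ⁻¹ * ‖a - b‖ := by
    rw [norm_smul, norm_inv, norm_norm]
    gcongr
  have h2 : ‖(‖a‖⁻¹ - ‖b‖⁻¹) • b‖ ≤ ρ⁻¹ * ‖a - b‖ := by
    rw [norm_smul, Real.norm_eq_abs]
    have habs : |‖a‖⁻¹ - ‖b‖⁻¹| = |‖b‖ - ‖a‖| / (‖a‖ * ‖b‖) := by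
      rw [div_eq_mul_inv, ← abs_of_pos (a := (‖a‖ * ‖b‖)⁻¹) (by positivity), ← abs_mul]
      congr 1
      field_simp
    rw [habs]
    have hnn : |‖b‖ - ‖a‖| ≤ ‖a - b‖ := by
      rw [abs_sub_comm]
      exact abs_norm_sub_norm_le a b
    calc |‖b‖ - ‖a‖| / (‖a‖ * ‖b‖) * ‖b‖ = |‖b‖ - ‖a‖| / ‖a‖ := by
          field_simp
      _ ≤ ‖a - b‖ / ρ := div_le_div₀ (norm_nonneg _) hnn hρ ha
      _ = ρ⁻¹ * ‖a - b‖ := by rw [div_eq_inv_mul]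
  calc ‖‖a‖⁻¹ • a - ‖b‖⁻¹ • b‖ ≤ ‖‖a‖⁻¹ • (a - b)‖ + ‖(‖a‖⁻¹ - ‖b‖⁻¹) • b‖ := by
        rw [key]; exact norm_add_le _ _
    _ ≤ ρ⁻¹ * ‖a - b‖ + ρ⁻¹ * ‖a - b‖ := add_le_add h1 h2
    _ = (2 / ρ) * ‖a - b‖ := by ring

lemma pow2_mul_inv_pow2 (a b c e : ℕ) (h : a + e = c + b) :
    (2:ℝ≥0∞)^a * 2⁻¹^b = 2^c * 2⁻¹^e := by
  have h2 : (2:ℝ≥0) ≠ 0 := two_ne_zero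
  rw [← ENNReal.coe_ofNat, ← ENNReal.coe_inv h2, ← ENNReal.coe_pow, ← ENNReal.coe_pow,
    ← ENNReal.coe_mul, ← ENNReal.coe_pow, ← ENNReal.coe_pow, ← ENNReal.coe_mul, ENNReal.coe_inj,
    inv_pow, inv_pow, ← div_eq_mul_inv, ← div_eq_mul_inv,
    div_eq_div_iff (pow_ne_zero _ h2) (pow_ne_zero _ h2), ← pow_add, ← pow_add]
  congr 1

noncomputable def transJ {d : ℕ} (v₁ v₂ : EuclideanSpace ℝ (Fin d)) :
    EuclideanSpace ℝ (Fin d) → EuclideanSpace ℝ (Fin d) :=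
  fun ω => ‖v₁ - v₂‖⁻¹ • ((v₁ - v₂) + (2 * (inner ℝ ω (v₂ - v₁) : ℝ)) • ω)

theorem stmt_19 (d : ℕ) (hd : 2 ≤ d) :
    ∃ C > 0, ∀ v₁ v₂ : EuclideanSpace ℝ (Fin d), v₁ ≠ v₂ →
      ∀ g : EuclideanSpace ℝ (Fin d) → ENNReal, Measurable g →
        ∫⁻ ω in {ω : EuclideanSpace ℝ (Fin d) |
              ω ∈ Metric.sphere (0 : EuclideanSpace ℝ (Fin d)) 1 ∧
              0 < (inner ℝ ω (v₂ - v₁) : ℝ)},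
            g (transJ v₁ v₂ ω) * ENNReal.ofReal ((inner ℝ ω (v₂ - v₁) : ℝ) ^ d)
            ∂(μH[(d : ℝ) - 1]) ≤
          ENNReal.ofReal (C * ‖v₁ - v₂‖ ^ d) *
            ∫⁻ ν in Metric.sphere (0 : EuclideanSpace ℝ (Fin d)) 1, g ν ∂(μH[(d : ℝ) - 1]) := by
  classical
  obtain ⟨m, rfl⟩ : ∃ m, d = m + 2 := ⟨d - 2, by omega⟩
  set d := m + 2 with hd_def
  refine ⟨2 ^ d, by positivity, ?_⟩
  intro v₁ v₂ hne g hg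
  set σ : Measure (EuclideanSpace ℝ (Fin d)) := μH[(d : ℝ) - 1] with hσ
  have hr : (0:ℝ) < ‖v₁ - v₂‖ := norm_sub_pos_iff.mpr hne
  set r : ℝ := ‖v₁ - v₂‖ with hrdef
  -- the normal direction
  set n : EuclideanSpace ℝ (Fin d) := r⁻¹ • (v₂ - v₁) with hn
  -- basic facts
  have hw_cont : Continuous fun ω : EuclideanSpace ℝ (Fin d) => (inner ℝ ω (v₂ - v₁) : ℝ) :=
    continuous_id.inner continuous_const
  have hJcont : Continuous (transJ v₁ v₂) := by
    unfold transJ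
    exact (continuous_const (y := (‖v₁ - v₂‖⁻¹ : ℝ))).smul (continuous_const.add
      ((continuous_const.mul hw_cont).smul continuous_id))
  have hJmeas : Measurable (transJ v₁ v₂) := hJcont.measurable
  have hsdim : (0:ℝ) ≤ (d:ℝ) - 1 := by
    have : (2:ℝ) ≤ (d:ℝ) := by exact_mod_cast hd
    linarith
  -- shells
  set S : ℕ → Set (EuclideanSpace ℝ (Fin d)) := fun k =>
    {ω : EuclideanSpace ℝ (Fin d) | ω ∈ Metric.sphere (0:EuclideanSpace ℝ (Fin d)) 1 ∧
      (inner ℝ ω (v₂ - v₁) : ℝ) ∈ Ioc (r * 2⁻¹ ^ (k+1)) (r * 2⁻¹ ^ k)} with hS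
  have hSmeas : ∀ k, MeasurableSet (S k) := by
    intro k
    exact (Metric.isClosed_sphere.measurableSet).inter
      (hw_cont.measurable measurableSet_Ioc)
  -- J(ω) + n
  have hJn : ∀ ω : EuclideanSpace ℝ (Fin d), transJ v₁ v₂ ω + n = (r⁻¹ * (2 * (inner ℝ ω (v₂ - v₁) : ℝ))) • ω := by
    intro ω
    show (r⁻¹ • ((v₁ - v₂) + (2 * (inner ℝ ω (v₂ - v₁) : ℝ)) • ω)) + r⁻¹ • (v₂ - v₁) = _
    module
  -- J maps the sphere to the sphere
  have hJsphere : ∀ ω : EuclideanSpace ℝ (Fin d), ω ∈ Metric.sphere (0:EuclideanSpace ℝ (Fin d)) 1 → ‖transJ v₁ v₂ ω‖ = 1 := by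
    intro ω hω
    have hω1 : ‖ω‖ = 1 := mem_sphere_zero_iff_norm.mp hω
    set t : ℝ := (inner ℝ ω (v₂ - v₁) : ℝ) with ht
    have hinner : (inner ℝ (v₁ - v₂) ω : ℝ) = - t := by
      rw [ht, show v₁ - v₂ = -(v₂ - v₁) by abel, inner_neg_left, real_inner_comm]
    have hsq : ‖(v₁ - v₂) + (2 * t) • ω‖ ^ 2 = r ^ 2 := by
      rw [norm_add_sq_real, real_inner_smul_right, hinner, norm_smul, Real.norm_eq_abs,
        hω1]
      rw [← hrdef]
      rw [mul_one, sq_abs]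
      ring
    have hnrm : ‖(v₁ - v₂) + (2 * t) • ω‖ = r := by
      have h1 := Real.sqrt_sq (norm_nonneg ((v₁ - v₂) + (2 * t) • ω))
      have h2 := Real.sqrt_sq hr.le
      rw [← h1, ← h2, hsq]
    show ‖r⁻¹ • ((v₁ - v₂) + (2 * t) • ω)‖ = 1
    rw [norm_smul, Real.norm_eq_abs, abs_of_pos (by positivity), hnrm, inv_mul_cancel₀ hr.ne']
  -- shell pushforward bound
  have shellbound : ∀ k : ℕ, ∫⁻ ω in S k, g (transJ v₁ v₂ ω) ∂σ ≤
      (2:ℝ≥0∞) ^ ((k+1)*(d-1)) * ∫⁻ ν in Metric.sphere (0:EuclideanSpace ℝ (Fin d)) 1, g ν ∂σ := by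
    intro k
    have hρpos : (0:ℝ) < 2⁻¹ ^ k := by positivity
    set ρ : ℝ := 2⁻¹ ^ k with hρ
    set c : ℝ≥0 := ⟨2 / ρ, by positivity⟩ with hc
    set Km : EuclideanSpace ℝ (Fin d) → EuclideanSpace ℝ (Fin d) :=
      fun ν => ‖ν + n‖⁻¹ • (ν + n) with hKm
    set T : Set (EuclideanSpace ℝ (Fin d)) := {ν | ρ ≤ ‖ν + n‖} with hT
    have hlip : LipschitzOnWith c Km T := by
      rw [lipschitzOnWith_iff_dist_le_mul]
      intro x hx y hy
      have h := (lipschitzOnWith_iff_dist_le_mul.mp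
        (normalize_lipschitzOnWith (E := EuclideanSpace ℝ (Fin d)) hρpos)) (x + n) hx (y + n) hy
      rw [dist_add_right] at h
      exact h
    -- the Lipschitz constant as a power of two
    have hcpow : (c : ℝ≥0∞) ^ ((d:ℝ) - 1) = (2:ℝ≥0∞) ^ ((k+1)*(d-1)) := by
      have hc2 : c = (2:ℝ≥0) ^ (k+1) := by
        apply NNReal.coe_injective
        show 2 / ρ = _
        push_cast
        rw [hρ, inv_pow, div_inv_eq_mul]
        ring
      have hcast : ((d:ℝ) - 1) = ((d - 1 : ℕ) : ℝ) := by
        rw [Nat.cast_sub (by omega : 1 ≤ d)]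
        simp
      rw [hc2, hcast, ENNReal.coe_pow, ENNReal.rpow_natCast, ← pow_mul]
      norm_num
    -- pushforward measure bound
    have key : Measure.map (transJ v₁ v₂) (σ.restrict (S k)) ≤
        ((c : ℝ≥0∞) ^ ((d:ℝ) - 1)) • σ.restrict (Metric.sphere (0:EuclideanSpace ℝ (Fin d)) 1) := by
      rw [Measure.le_iff]
      intro A hA
      rw [Measure.map_apply hJmeas hA, Measure.restrict_apply (hJmeas hA),
        Measure.smul_apply, Measure.restrict_apply hA, smul_eq_mul]
      have hsub : transJ v₁ v₂ ⁻¹' A ∩ S k ⊆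
          Km '' ((A ∩ Metric.sphere (0:EuclideanSpace ℝ (Fin d)) 1) ∩ T) := by
        rintro ω ⟨hA', hωs, hlo, hhi⟩
        have hω1 : ‖ω‖ = 1 := mem_sphere_zero_iff_norm.mp hωs
        set t : ℝ := (inner ℝ ω (v₂ - v₁) : ℝ) with ht
        have htpos : 0 < t := lt_trans (by positivity) hlo
        have hJnω := hJn ω
        have hnrm : ‖transJ v₁ v₂ ω + n‖ = r⁻¹ * (2 * t) := by
          rw [hJnω, norm_smul, Real.norm_eq_abs, hω1, mul_one, abs_of_pos (by positivity)]
        refine ⟨transJ v₁ v₂ ω, ⟨⟨hA', ?_⟩, ?_⟩, ?_⟩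
        · exact mem_sphere_zero_iff_norm.mpr (hJsphere ω hωs)
        · show ρ ≤ ‖transJ v₁ v₂ ω + n‖
          rw [hnrm]
          have h1 : r * 2⁻¹ ^ (k+1) < t := hlo
          have h2 : (2:ℝ)⁻¹ ^ (k+1) = ρ * 2⁻¹ := by rw [hρ, pow_succ]
          rw [h2] at h1
          rw [inv_mul_eq_div, le_div_iff₀ hr]
          nlinarith
        · show ‖transJ v₁ v₂ ω + n‖⁻¹ • (transJ v₁ v₂ ω + n) = ω
          rw [hnrm, hJnω, smul_smul, inv_mul_cancel₀ (by positivity), one_smul]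
      calc σ (transJ v₁ v₂ ⁻¹' A ∩ S k)
          ≤ σ (Km '' ((A ∩ Metric.sphere (0:EuclideanSpace ℝ (Fin d)) 1) ∩ T)) :=
            measure_mono hsub
        _ ≤ (c : ℝ≥0∞) ^ ((d:ℝ) - 1) *
              σ ((A ∩ Metric.sphere (0:EuclideanSpace ℝ (Fin d)) 1) ∩ T) := by
            rw [hσ]
            exact (hlip.mono inter_subset_right).hausdorffMeasure_image_le hsdim
        _ ≤ (c : ℝ≥0∞) ^ ((d:ℝ) - 1) *
              σ (A ∩ Metric.sphere (0:EuclideanSpace ℝ (Fin d)) 1) := by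
            exact mul_le_mul_right (measure_mono inter_subset_left) _
    calc ∫⁻ ω in S k, g (transJ v₁ v₂ ω) ∂σ
        = ∫⁻ ν, g ν ∂(Measure.map (transJ v₁ v₂) (σ.restrict (S k))) :=
          (lintegral_map hg hJmeas).symm
      _ ≤ ∫⁻ ν, g ν ∂(((c : ℝ≥0∞) ^ ((d:ℝ) - 1)) •
            σ.restrict (Metric.sphere (0:EuclideanSpace ℝ (Fin d)) 1)) :=
          lintegral_mono' key le_rfl
      _ = (2:ℝ≥0∞) ^ ((k+1)*(d-1)) *
            ∫⁻ ν in Metric.sphere (0:EuclideanSpace ℝ (Fin d)) 1, g ν ∂σ := by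
          rw [lintegral_smul_measure, hcpow, smul_eq_mul]
  -- covering and disjointness
  have hcover : {ω : EuclideanSpace ℝ (Fin d) | ω ∈ Metric.sphere (0:EuclideanSpace ℝ (Fin d)) 1 ∧ 0 < (inner ℝ ω (v₂ - v₁) : ℝ)} =
      ⋃ k, S k := by
    ext ω
    simp only [Set.mem_setOf_eq, Set.mem_iUnion, hS, Set.mem_Ioc]
    constructor
    · rintro ⟨hωs, hpos⟩
      have hω1 : ‖ω‖ = 1 := mem_sphere_zero_iff_norm.mp hωs
      have hle : (inner ℝ ω (v₂ - v₁) : ℝ) ≤ r := by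
        calc (inner ℝ ω (v₂ - v₁) : ℝ) ≤ ‖ω‖ * ‖v₂ - v₁‖ := real_inner_le_norm _ _
          _ = r := by rw [hω1, one_mul, norm_sub_rev]
      have hex : ∃ k : ℕ, r * 2⁻¹ ^ (k+1) < (inner ℝ ω (v₂ - v₁) : ℝ) := by
        obtain ⟨k, hk⟩ := exists_pow_lt_of_lt_one (div_pos hpos hr)
          (by norm_num : (2:ℝ)⁻¹ < 1)
        refine ⟨k, ?_⟩
        have h1 : (2:ℝ)⁻¹ ^ (k+1) ≤ 2⁻¹ ^ k := by
          apply pow_le_pow_of_le_one (by norm_num) (by norm_num)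
          omega
        have h2 : r * 2⁻¹ ^ k < (inner ℝ ω (v₂ - v₁) : ℝ) := by
          rw [mul_comm, ← lt_div_iff₀ hr]
          exact hk
        nlinarith
      refine ⟨Nat.find hex, hωs, Nat.find_spec hex, ?_⟩
      rcases Nat.eq_zero_or_pos (Nat.find hex) with h0 | h0
      · rw [h0]
        simpa using hle
      · have hmin := Nat.find_min hex (Nat.sub_lt h0 one_pos)
        push_neg at hmin
        have heq : Nat.find hex - 1 + 1 = Nat.find hex := by omega
        rwa [heq] at hmin
    · rintro ⟨k, hωs, hlo, _⟩
      exact ⟨hωs, lt_trans (by positivity) hlo⟩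
  have hdisj : Pairwise (Function.onFun Disjoint S) := by
    have haux : ∀ i j : ℕ, i < j → Disjoint (S i) (S j) := by
      intro i j hij
      rw [Set.disjoint_left]
      rintro ω ⟨_, hlo, _⟩ ⟨_, _, hhi⟩
      have h1 : (2:ℝ)⁻¹ ^ j ≤ 2⁻¹ ^ (i+1) := by
        apply pow_le_pow_of_le_one (by norm_num) (by norm_num)
        omega
      have h2 : r * 2⁻¹ ^ j ≤ r * 2⁻¹ ^ (i+1) := by nlinarith
      linarith
    intro i j hij
    rcases lt_or_gt_of_ne hij with h | h
    · exact haux i j h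
    · exact (haux j i h).symm
  -- main computation
  rw [hcover, lintegral_iUnion hSmeas hdisj]
  set I : ℝ≥0∞ := ∫⁻ ν in Metric.sphere (0:EuclideanSpace ℝ (Fin d)) 1, g ν ∂σ with hI
  have pershell : ∀ k : ℕ,
      ∫⁻ ω in S k, g (transJ v₁ v₂ ω) * ENNReal.ofReal ((inner ℝ ω (v₂ - v₁) : ℝ) ^ d) ∂σ ≤
        (ENNReal.ofReal (r ^ d) * I) * ((2:ℝ≥0∞) ^ ((k+1)*(d-1)) * 2⁻¹ ^ (k*d)) := by
    intro k
    set Ck : ℝ≥0∞ := ENNReal.ofReal (r ^ d) * 2⁻¹ ^ (k*d) with hCk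
    have step1 : ∫⁻ ω in S k,
        g (transJ v₁ v₂ ω) * ENNReal.ofReal ((inner ℝ ω (v₂ - v₁) : ℝ) ^ d) ∂σ ≤
        ∫⁻ ω in S k, g (transJ v₁ v₂ ω) * Ck ∂σ := by
      apply setLIntegral_mono' (hSmeas k)
      rintro ω ⟨_, hlo, hhi⟩
      apply mul_le_mul_right
      have hpos : 0 < (inner ℝ ω (v₂ - v₁) : ℝ) := lt_trans (by positivity) hlo
      have hwd : (inner ℝ ω (v₂ - v₁) : ℝ) ^ d ≤ r ^ d * 2⁻¹ ^ (k * d) := by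
        calc (inner ℝ ω (v₂ - v₁) : ℝ) ^ d ≤ (r * 2⁻¹ ^ k) ^ d := by
              apply pow_le_pow_left₀ hpos.le hhi
          _ = r ^ d * 2⁻¹ ^ (k * d) := by rw [mul_pow, ← pow_mul]
      calc ENNReal.ofReal ((inner ℝ ω (v₂ - v₁) : ℝ) ^ d)
          ≤ ENNReal.ofReal (r ^ d * 2⁻¹ ^ (k * d)) := ENNReal.ofReal_le_ofReal hwd
        _ = Ck := by
            rw [hCk, ENNReal.ofReal_mul (by positivity)]
            congr 1
            rw [ENNReal.ofReal_pow (by norm_num)]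
            congr 1
            rw [show ((2:ℝ)⁻¹) = ((2:ℝ))⁻¹ from rfl, ENNReal.ofReal_inv_of_pos (by norm_num)]
            norm_num
    have step2 : ∫⁻ ω in S k, g (transJ v₁ v₂ ω) * Ck ∂σ =
        (∫⁻ ω in S k, g (transJ v₁ v₂ ω) ∂σ) * Ck :=
      lintegral_mul_const Ck (hg.comp hJmeas)
    have hCkfin : Ck ≠ ⊤ := by
      rw [hCk]
      exact ENNReal.mul_ne_top ENNReal.ofReal_ne_top
        (ENNReal.pow_ne_top (by norm_num))
    calc ∫⁻ ω in S k,
        g (transJ v₁ v₂ ω) * ENNReal.ofReal ((inner ℝ ω (v₂ - v₁) : ℝ) ^ d) ∂σ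
        ≤ (∫⁻ ω in S k, g (transJ v₁ v₂ ω) ∂σ) * Ck := step1.trans_eq step2
      _ ≤ ((2:ℝ≥0∞) ^ ((k+1)*(d-1)) * I) * Ck := mul_le_mul_left (shellbound k) Ck
      _ = (ENNReal.ofReal (r ^ d) * I) * ((2:ℝ≥0∞) ^ ((k+1)*(d-1)) * 2⁻¹ ^ (k*d)) := by
          rw [hCk]; ring
  calc ∑' k, ∫⁻ ω in S k,
        g (transJ v₁ v₂ ω) * ENNReal.ofReal ((inner ℝ ω (v₂ - v₁) : ℝ) ^ d) ∂σ
      ≤ ∑' k, (ENNReal.ofReal (r ^ d) * I) *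
          ((2:ℝ≥0∞) ^ ((k+1)*(d-1)) * 2⁻¹ ^ (k*d)) := ENNReal.tsum_le_tsum pershell
    _ = (ENNReal.ofReal (r ^ d) * I) *
          ∑' k, ((2:ℝ≥0∞) ^ ((k+1)*(d-1)) * 2⁻¹ ^ (k*d)) := ENNReal.tsum_mul_left
    _ = (ENNReal.ofReal (r ^ d) * I) * ∑' k : ℕ, (2:ℝ≥0∞) ^ d * 2⁻¹ ^ (k+1) := by
        congr 1
        apply tsum_congr
        intro k
        apply pow2_mul_inv_pow2
        have hd1 : d - 1 = m + 1 := by omega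
        rw [hd1, hd_def]
        ring
    _ = (ENNReal.ofReal (r ^ d) * I) * ((2:ℝ≥0∞) ^ d * ∑' k : ℕ, (2:ℝ≥0∞)⁻¹ ^ (k+1)) := by
        rw [ENNReal.tsum_mul_left]
    _ = ENNReal.ofReal ((2:ℝ) ^ d * r ^ d) * I := by
        have hsum : ∑' k : ℕ, (2:ℝ≥0∞)⁻¹ ^ (k+1) = 1 := by
          simp only [pow_succ']
          rw [ENNReal.tsum_mul_left, ENNReal.tsum_geometric, ENNReal.one_sub_inv_two, inv_inv]
          exact ENNReal.inv_mul_cancel two_ne_zero ENNReal.ofNat_ne_top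
        rw [hsum, mul_one, ENNReal.ofReal_mul (by positivity),
          show ENNReal.ofReal ((2:ℝ)^d) = (2:ℝ≥0∞)^d by
            rw [ENNReal.ofReal_pow (by norm_num), ENNReal.ofReal_ofNat]]
        ring
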